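/- Let F be a finite field of odd characteristic and V a finite-dimensional F-vector space with a direct sum decomposition V = V₁ ⊕ V₂ ⊕ V₃ where each Vᵢ is nonzero. If H is a subgroup of SL(V) containing SL(V₁ ⊕ V₂) and SL(V₂ ⊕ V₃) (each embedded as block automorphisms acting as the identity on the complementary summand), then H = SL(V). -/

import Mathlib

open Matrix
set_option linter.unusedSectionVars false
set_option maxHeartbeats 1000000
set_option maxRecDepth 8000

namespace SL3Aux
variable {ι : Type*} {R : Type*} [Field R] [Fintype ι] [DecidableEq ι]

lemma stdNeg (a b : ι) (x : R) : single a b (-x) = -single a b x := by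
  rw [show (-x) = (-1 : R) • x by simp, ← smul_single, neg_one_smul]

lemma tv_X {i j : ι} (hij : i ≠ j) (a : R) (ha : a ≠ 0) :
    transvection i j a * transvection j i (-a⁻¹) * transvection i j a
      = 1 + single i j a - single j i a⁻¹
        - single i i 1 - single j j 1 := by
  simp only [Matrix.transvection]
  noncomm_ring
  simp [single_mul_single_same, single_mul_single_of_ne, hij, hij.symm, stdNeg,
    inv_mul_cancel₀ ha, mul_inv_cancel₀ ha, two_mul, single_add]
  abel

lemma tv_diag {i j : ι} (hij : i ≠ j) (a : R) (ha : a ≠ 0) :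
    transvection i j a * transvection j i (-a⁻¹) * transvection i j a *
      (transvection i j (-1) * transvection j i 1 * transvection i j (-1))
      = diagonal (fun k => if k = i then a else if k = j then a⁻¹ else 1) := by
  have hd : diagonal (fun k => if k = i then a else if k = j then a⁻¹ else 1)
      = 1 + single i i (a - 1) + single j j (a⁻¹ - 1) := by
    ext p q
    simp only [diagonal_apply, Matrix.add_apply, one_apply, single, of_apply]
    by_cases h3 : p = q
    · subst h3
      rcases eq_or_ne p i with rfl | h1
      · have hj : ¬ j = p := fun h => hij h.symm
        simp [hij, hj]
      · rcases eq_or_ne p j with rfl | h2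
        · have hi : ¬ i = p := fun h => h1 h.symm
          simp [h1, hi]
        · have hi : ¬ i = p := fun h => h1 h.symm
          have hj : ¬ j = p := fun h => h2 h.symm
          simp [h1, h2, hi, hj]
    · have hi : ¬(i = p ∧ i = q) := fun h => h3 (h.1.symm.trans h.2)
      have hj : ¬(j = p ∧ j = q) := fun h => h3 (h.1.symm.trans h.2)
      simp [h3, hi, hj]
  have h := tv_X hij (-1 : R) (by norm_num)
  rw [inv_neg_one, neg_neg] at h
  rw [tv_X hij a ha, h, hd]
  noncomm_ring
  simp [single_mul_single_same, single_mul_single_of_ne, hij, hij.symm, stdNeg,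
    inv_mul_cancel₀ ha, mul_inv_cancel₀ ha, mul_sub, sub_mul, two_mul, single_add,
    sub_eq_add_neg]
  abel_nf
  have e2 : ∀ p : ι, single p p (2:R) = single p p 1 + single p p 1 := by
    intro p; rw [← single_add]; norm_num
  simp [e2]
  abel

lemma tv_comm {i j k : ι} (hij : i ≠ j) (hjk : j ≠ k) (hik : i ≠ k) (c : R) :
    transvection i j c * transvection j k 1 * transvection i j (-c) * transvection j k (-1)
      = transvection i k c := by
  simp only [Matrix.transvection]
  noncomm_ring
  simp [single_mul_single_same, single_mul_single_of_ne, hij, hjk, hik, hij.symm, hjk.symm,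
    hik.symm, stdNeg, two_mul, single_add]
  abel

/-- transvection as a unit -/
def tvU (i j : ι) (hij : i ≠ j) (c : R) : (Matrix ι ι R)ˣ where
  val := transvection i j c
  inv := transvection i j (-c)
  val_inv := by rw [transvection_mul_transvection_same _ _ hij]; simp
  inv_val := by rw [transvection_mul_transvection_same _ _ hij]; simp

@[simp] lemma tvU_val (i j : ι) (hij : i ≠ j) (c : R) :
    (tvU i j hij c : Matrix ι ι R) = transvection i j c := rfl

lemma mem_of_val_transvection (H' : Subgroup (Matrix ι ι R)ˣ)
    (htv : ∀ (i j : ι) (hij : i ≠ j) (c : R), tvU i j hij c ∈ H')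
    {i j : ι} (hij : i ≠ j) {c : R} {u : (Matrix ι ι R)ˣ}
    (hu : (u : Matrix ι ι R) = transvection i j c) : u ∈ H' := by
  have : u = tvU i j hij c := Units.ext (by simpa using hu)
  rw [this]; exact htv i j hij c

lemma diag_mem [DecidableEq R] (H' : Subgroup (Matrix ι ι R)ˣ)
    (htv : ∀ (i j : ι) (hij : i ≠ j) (c : R), tvU i j hij c ∈ H') :
    ∀ (n : ℕ) (D : ι → R), (Finset.univ.filter fun k => D k ≠ 1).card ≤ n →
      ∏ k, D k = 1 → ∀ u : (Matrix ι ι R)ˣ, (u : Matrix ι ι R) = diagonal D → u ∈ H' := by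
  intro n
  induction n with
  | zero =>
    intro D hcard _ u hu
    have hD : ∀ k, D k = 1 := by
      intro k
      by_contra hk
      have hmem : k ∈ Finset.univ.filter fun k => D k ≠ 1 := by simp [hk]
      have := Finset.card_pos.mpr ⟨k, hmem⟩
      omega
    have hD1 : diagonal D = 1 := by
      rw [show D = fun _ => (1:R) from funext hD, diagonal_one]
    have : u = 1 := Units.ext (by rw [hu, hD1, Units.val_one])
    rw [this]; exact one_mem _
  | succ n ih =>
    intro D hcard hprod u hu
    by_cases hall : ∀ k, D k = 1
    · have hD1 : diagonal D = 1 := by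
        rw [show D = fun _ => (1:R) from funext hall, diagonal_one]
      have : u = 1 := Units.ext (by rw [hu, hD1, Units.val_one])
      rw [this]; exact one_mem _
    push_neg at hall
    obtain ⟨i, hi⟩ := hall
    have hne : ∀ k, D k ≠ 0 := by
      intro k hk
      have h0 : ∏ k, D k = 0 := Finset.prod_eq_zero (Finset.mem_univ k) hk
      rw [hprod] at h0; exact one_ne_zero h0
    have hex : ∃ j, j ≠ i ∧ D j ≠ 1 := by
      by_contra hc
      push_neg at hc
      have h0 : ∏ k, D k = D i := Finset.prod_eq_single i (fun b _ hb => hc b hb) (by simp)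
      rw [hprod] at h0; exact hi h0.symm
    obtain ⟨j, hji, hj⟩ := hex
    have hij : i ≠ j := fun h => hji h.symm
    set a := D i with ha_def
    have ha : a ≠ 0 := hne i
    set up : (Matrix ι ι R)ˣ := tvU i j hij a * tvU j i hij.symm (-a⁻¹) * tvU i j hij a *
      (tvU i j hij (-1) * tvU j i hij.symm 1 * tvU i j hij (-1)) with hup_def
    have hupmem : up ∈ H' :=
      mul_mem (mul_mem (mul_mem (htv _ _ _ _) (htv _ _ _ _)) (htv _ _ _ _))
        (mul_mem (mul_mem (htv _ _ _ _) (htv _ _ _ _)) (htv _ _ _ _))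
    have hupval : (up : Matrix ι ι R)
        = diagonal (fun k => if k = i then a else if k = j then a⁻¹ else 1) := by
      simp only [hup_def, Units.val_mul, tvU_val]
      exact tv_diag hij a ha
    set D' : ι → R := Function.update (Function.update D i 1) j (D i * D j) with hD'_def
    have hD'i : D' i = 1 := by
      rw [hD'_def, Function.update_of_ne hij, Function.update_self]
    have hD'j : D' j = D i * D j := by rw [hD'_def, Function.update_self]
    have hD'k : ∀ k, k ≠ i → k ≠ j → D' k = D k := by
      intro k hki hkj
      rw [hD'_def, Function.update_of_ne hkj, Function.update_of_ne hki]
    have hDD' : diagonal D = diagonal D' *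
        diagonal (fun k => if k = i then a else if k = j then a⁻¹ else 1) := by
      rw [diagonal_mul_diagonal]
      apply congrArg diagonal
      funext k
      rcases eq_or_ne k i with rfl | hki
      · simp [hD'i, ha_def]
      · rcases eq_or_ne k j with rfl | hkj
        · simp [hD'j, hji]
          rw [mul_comm (D i), mul_assoc, mul_inv_cancel₀ (hne i), mul_one]
        · simp [Pi.mul_apply, hD'k k hki hkj, hki, hkj]
    have hprod' : ∏ k, D' k = 1 := by
      rw [hD'_def, Finset.prod_update_of_mem (Finset.mem_univ j)]
      rw [Finset.sdiff_singleton_eq_erase]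
      rw [Finset.prod_update_of_mem (Finset.mem_erase.mpr ⟨hij, Finset.mem_univ i⟩)]
      rw [Finset.sdiff_singleton_eq_erase]
      have h1 : D j * (D i * ∏ k ∈ (Finset.univ.erase j).erase i, D k) = 1 := by
        rw [Finset.mul_prod_erase _ D (Finset.mem_erase.mpr ⟨hij, Finset.mem_univ i⟩),
          Finset.mul_prod_erase _ D (Finset.mem_univ j)]
        exact hprod
      linear_combination h1
    have hcard' : ((Finset.univ.filter fun k => D' k ≠ 1).card) ≤ n := by
      have hsub : (Finset.univ.filter fun k => D' k ≠ 1)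
          ⊆ (Finset.univ.filter fun k => D k ≠ 1).erase i := by
        intro k hk
        simp only [Finset.mem_filter, Finset.mem_univ, true_and] at hk
        have hki : k ≠ i := by
          rintro rfl
          exact hk hD'i
        rw [Finset.mem_erase]
        refine ⟨hki, ?_⟩
        simp only [Finset.mem_filter, Finset.mem_univ, true_and]
        rcases eq_or_ne k j with rfl | hkj
        · exact hj
        · intro hDk
          exact hk ((hD'k k hki hkj).trans hDk)
      have hc1 := Finset.card_le_card hsub
      have hi_mem : i ∈ Finset.univ.filter fun k => D k ≠ 1 := by simp; exact hi
      have hc2 := Finset.card_erase_of_mem hi_mem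
      have hc3 := Finset.card_pos.mpr ⟨i, hi_mem⟩
      omega
    have hval' : ((u * up⁻¹ : (Matrix ι ι R)ˣ) : Matrix ι ι R) = diagonal D' := by
      have hval : (u : Matrix ι ι R) = diagonal D' * (up : Matrix ι ι R) := by
        rw [hu, hDD', hupval]
      rw [Units.val_mul, hval, mul_assoc, ← Units.val_mul, mul_inv_cancel, Units.val_one, mul_one]
    have hmem' : (u * up⁻¹) ∈ H' := ih D' hcard' hprod' _ hval'
    have hu2 : u = (u * up⁻¹) * up := by rw [inv_mul_cancel_right]
    rw [hu2]
    exact mul_mem hmem' hupmem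

theorem sl_mem [DecidableEq R] (H' : Subgroup (Matrix ι ι R)ˣ)
    (htv : ∀ (i j : ι) (hij : i ≠ j) (c : R), tvU i j hij c ∈ H')
    (u : (Matrix ι ι R)ˣ) (hdet : (u : Matrix ι ι R).det = 1) : u ∈ H' := by
  obtain ⟨L, L', D, hLL⟩ :=
    Pivot.exists_list_transvec_mul_mul_list_transvec_eq_diagonal (u : Matrix ι ι R)
  classical
  let f : TransvectionStruct ι R → (Matrix ι ι R)ˣ := fun t => tvU t.i t.j t.hij t.c
  have hval : ∀ (M : List (TransvectionStruct ι R)),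
      (((M.map f).prod : (Matrix ι ι R)ˣ) : Matrix ι ι R)
        = (M.map TransvectionStruct.toMatrix).prod := by
    intro M
    rw [← Units.coeHom_apply, map_list_prod, List.map_map]
    rfl
  have hmem : ∀ (M : List (TransvectionStruct ι R)), (M.map f).prod ∈ H' := by
    intro M
    apply Subgroup.list_prod_mem
    intro x hx
    obtain ⟨t, _, rfl⟩ := List.mem_map.mp hx
    exact htv t.i t.j t.hij t.c
  set uL := (L.map f).prod with huL
  set uL' := (L'.map f).prod with huL'
  set uD := uL * u * uL' with huD
  have hDval : (uD : Matrix ι ι R) = diagonal D := by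
    rw [huD, Units.val_mul, Units.val_mul, hval, hval, hLL]
  have hdetD : ∏ k, D k = 1 := by
    have h1 : (diagonal D).det = 1 := by
      rw [← hDval, huD, Units.val_mul, Units.val_mul, det_mul, det_mul, hval, hval,
        TransvectionStruct.det_toMatrix_prod, TransvectionStruct.det_toMatrix_prod, hdet]
      ring
    rwa [det_diagonal] at h1
  have hmemD : uD ∈ H' :=
    diag_mem H' htv ((Finset.univ.filter fun k => D k ≠ 1).card) D le_rfl hdetD uD hDval
  have hu2 : u = uL⁻¹ * uD * uL'⁻¹ := by
    rw [huD]
    group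
  rw [hu2]
  exact mul_mem (mul_mem (inv_mem (hmem L)) hmemD) (inv_mem (hmem L'))

end SL3Aux


open SL3Aux

/-- If `V = V₁ ⊕ V₂ ⊕ V₃` over a finite field of odd characteristic
with each `Vᵢ` nonzero, and `H ≤ SL(V)` contains `SL(V₁ ⊕ V₂)` and `SL(V₂ ⊕ V₃)`
(block automorphisms fixing the complementary summand), then `H = SL(V)`. -/
theorem stmt_0 (F : Type*) [Field F] [Fintype F] (hchar : ringChar F ≠ 2)
    (V : Type*) [AddCommGroup V] [Module F V] [FiniteDimensional F V]
    (V₁ V₂ V₃ : Submodule F V)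
    (h1 : V₁ ≠ ⊥) (h2 : V₂ ≠ ⊥) (h3 : V₃ ≠ ⊥)
    (hsup : V₁ ⊔ V₂ ⊔ V₃ = ⊤)
    (hind1 : V₁ ⊓ (V₂ ⊔ V₃) = ⊥) (hind2 : V₂ ⊓ (V₁ ⊔ V₃) = ⊥)
    (hind3 : V₃ ⊓ (V₁ ⊔ V₂) = ⊥)
    (H : Subgroup (V ≃ₗ[F] V))
    (hSL : ∀ g ∈ H, LinearMap.det (g : V →ₗ[F] V) = 1)
    (hL : ∀ g : V ≃ₗ[F] V, LinearMap.det (g : V →ₗ[F] V) = 1 →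
      (∀ x ∈ V₁ ⊔ V₂, g x ∈ V₁ ⊔ V₂) → (∀ x ∈ V₃, g x = x) → g ∈ H)
    (hR : ∀ g : V ≃ₗ[F] V, LinearMap.det (g : V →ₗ[F] V) = 1 →
      (∀ x ∈ V₂ ⊔ V₃, g x ∈ V₂ ⊔ V₃) → (∀ x ∈ V₁, g x = x) → g ∈ H) :
    ∀ g : V ≃ₗ[F] V, LinearMap.det (g : V →ₗ[F] V) = 1 → g ∈ H := by
  classical
  set A : Fin 3 → Submodule F V := ![V₁, V₂, V₃] with hA
  have hA0 : A 0 = V₁ := rfl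
  have hA1 : A 1 = V₂ := rfl
  have hA2 : A 2 = V₃ := rfl
  -- independence of the three summands
  have hle0 : (⨆ (j) (_ : j ≠ (0 : Fin 3)), A j) ≤ V₂ ⊔ V₃ := by
    apply iSup_le; intro j; apply iSup_le; intro hj
    fin_cases j
    · exact absurd rfl hj
    · exact le_sup_left
    · exact le_sup_right
  have hle1 : (⨆ (j) (_ : j ≠ (1 : Fin 3)), A j) ≤ V₁ ⊔ V₃ := by
    apply iSup_le; intro j; apply iSup_le; intro hj
    fin_cases j
    · exact le_sup_left
    · exact absurd rfl hj
    · exact le_sup_right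
  have hle2 : (⨆ (j) (_ : j ≠ (2 : Fin 3)), A j) ≤ V₁ ⊔ V₂ := by
    apply iSup_le; intro j; apply iSup_le; intro hj
    fin_cases j
    · exact le_sup_left
    · exact le_sup_right
    · exact absurd rfl hj
  have hindep : iSupIndep A := by
    rw [iSupIndep_def]
    intro i
    fin_cases i
    · exact disjoint_iff_inf_le.mpr (le_trans (inf_le_inf_left _ hle0) (le_of_eq hind1))
    · exact disjoint_iff_inf_le.mpr (le_trans (inf_le_inf_left _ hle1) (le_of_eq hind2))
    · exact disjoint_iff_inf_le.mpr (le_trans (inf_le_inf_left _ hle2) (le_of_eq hind3))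
  have htop : iSup A = ⊤ := by
    rw [eq_top_iff, ← hsup]
    exact sup_le (sup_le (le_iSup A 0) (le_iSup A 1)) (le_iSup A 2)
  have hInt : DirectSum.IsInternal A :=
    DirectSum.isInternal_submodule_of_iSupIndep_of_iSup_eq_top hindep htop
  let n : Fin 3 → ℕ := fun i => Module.finrank F (A i)
  let v : ∀ i, Module.Basis (Fin (n i)) F (A i) := fun i => Module.finBasis F (A i)
  let b : Module.Basis ((i : Fin 3) × Fin (n i)) F V := hInt.collectedBasis v
  have hbmem : ∀ p : (i : Fin 3) × Fin (n i), (b p : V) ∈ A p.1 :=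
    hInt.collectedBasis_mem v
  have hbcoe : ∀ (i : Fin 3) (a : Fin (n i)), b ⟨i, a⟩ = ((v i a : A i) : V) := by
    intro i a
    exact congrFun (hInt.collectedBasis_coe v) ⟨i, a⟩
  have hspan : ∀ i : Fin 3,
      A i ≤ Submodule.span F (Set.range fun a : Fin (n i) => (b ⟨i, a⟩ : V)) := by
    intro i x hx
    have hrange : (fun a : Fin (n i) => (b ⟨i, a⟩ : V)) = ((A i).subtype ∘ v i) :=
      funext fun a => hbcoe i a
    have h1 : (⟨x, hx⟩ : A i) ∈ Submodule.span F (Set.range (v i)) := by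
      rw [(v i).span_eq]; trivial
    have h2 := Submodule.mem_map_of_mem (f := (A i).subtype) h1
    rw [Submodule.map_span] at h2
    rw [hrange, Set.range_comp]
    exact h2
  -- the group isomorphism
  let ψ : (Matrix ((i : Fin 3) × Fin (n i)) ((i : Fin 3) × Fin (n i)) F)ˣ ≃* (V ≃ₗ[F] V) :=
    (Units.mapEquiv (LinearMap.toMatrixAlgEquiv b).symm.toRingEquiv.toMulEquiv).trans
      (LinearMap.GeneralLinearGroup.generalLinearEquiv F V)
  have hψ : ∀ u, ((ψ u : V ≃ₗ[F] V) : V →ₗ[F] V)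
      = Matrix.toLin b b (u : Matrix ((i : Fin 3) × Fin (n i)) ((i : Fin 3) × Fin (n i)) F) :=
    fun u => rfl
  have hdetψ : ∀ u, LinearMap.det ((ψ u : V ≃ₗ[F] V) : V →ₗ[F] V)
      = Matrix.det (u : Matrix ((i : Fin 3) × Fin (n i)) ((i : Fin 3) × Fin (n i)) F) :=
    fun u => by rw [hψ u, LinearMap.det_toLin]
  have happly : ∀ u (p : (i : Fin 3) × Fin (n i)),
      (ψ u) (b p) = ∑ k, (u : Matrix _ _ F) k p • b k := by
    intro u p
    have h1 : (ψ u) (b p) = ((ψ u : V ≃ₗ[F] V) : V →ₗ[F] V) (b p) := rfl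
    rw [h1, hψ, Matrix.toLin_self]
  set H' : Subgroup (Matrix ((i : Fin 3) × Fin (n i)) ((i : Fin 3) × Fin (n i)) F)ˣ :=
    Subgroup.comap ψ.toMonoidHom H with hH'
  have hVsub12 : ∀ p : (i : Fin 3) × Fin (n i), p.1 ≠ 2 → (b p : V) ∈ V₁ ⊔ V₂ := by
    intro p hp
    have hcase : ∀ m : Fin 3, m ≠ 2 → m = 0 ∨ m = 1 := by decide
    rcases hcase p.1 hp with h | h
    · exact Submodule.mem_sup_left (show (b p : V) ∈ V₁ by rw [← hA0, ← h]; exact hbmem p)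
    · exact Submodule.mem_sup_right (show (b p : V) ∈ V₂ by rw [← hA1, ← h]; exact hbmem p)
  have hVsub23 : ∀ p : (i : Fin 3) × Fin (n i), p.1 ≠ 0 → (b p : V) ∈ V₂ ⊔ V₃ := by
    intro p hp
    have hcase : ∀ m : Fin 3, m ≠ 0 → m = 1 ∨ m = 2 := by decide
    rcases hcase p.1 hp with h | h
    · exact Submodule.mem_sup_left (show (b p : V) ∈ V₂ by rw [← hA1, ← h]; exact hbmem p)
    · exact Submodule.mem_sup_right (show (b p : V) ∈ V₃ by rw [← hA2, ← h]; exact hbmem p)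
  -- membership criteria
  have hLmem : ∀ u : (Matrix ((i : Fin 3) × Fin (n i)) ((i : Fin 3) × Fin (n i)) F)ˣ,
      Matrix.det (u : Matrix ((i : Fin 3) × Fin (n i)) ((i : Fin 3) × Fin (n i)) F) = 1 →
      (∀ k l : (i : Fin 3) × Fin (n i), l.1 = 2 → (u : Matrix _ _ F) k l = (1 : Matrix _ _ F) k l) →
      (∀ k l : (i : Fin 3) × Fin (n i), k.1 = 2 → l.1 ≠ 2 → (u : Matrix _ _ F) k l = 0) →
      ψ u ∈ H := by
    intro u hdet hcol hzero
    apply hL (ψ u) ((hdetψ u).trans hdet)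
    · intro x hx
      have hgen : ∀ p : (i : Fin 3) × Fin (n i), p.1 ≠ 2 → (ψ u) (b p) ∈ V₁ ⊔ V₂ := by
        intro p hp
        rw [happly]
        apply Submodule.sum_mem
        intro k _
        by_cases hk : k.1 = 2
        · rw [hzero k p hk hp, zero_smul]; exact Submodule.zero_mem _
        · exact Submodule.smul_mem _ _ (hVsub12 k hk)
      have hsub : V₁ ⊔ V₂ ≤ Submodule.comap ((ψ u : V ≃ₗ[F] V) : V →ₗ[F] V) (V₁ ⊔ V₂) := by
        apply sup_le
        · refine le_trans (hspan 0) (Submodule.span_le.mpr ?_)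
          rintro _ ⟨a, rfl⟩
          exact Submodule.mem_comap.mpr (hgen ⟨0, a⟩ (show (0:Fin 3) ≠ 2 by decide))
        · refine le_trans (hspan 1) (Submodule.span_le.mpr ?_)
          rintro _ ⟨a, rfl⟩
          exact Submodule.mem_comap.mpr (hgen ⟨1, a⟩ (show (1:Fin 3) ≠ 2 by decide))
      exact hsub hx
    · intro x hx
      have hsub : V₃ ≤ LinearMap.eqLocus ((ψ u : V ≃ₗ[F] V) : V →ₗ[F] V) LinearMap.id := by
        refine le_trans (hspan 2) (Submodule.span_le.mpr ?_)
        rintro _ ⟨a, rfl⟩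
        have hfix : (ψ u) (b ⟨2, a⟩) = b ⟨2, a⟩ := by
          rw [happly]
          rw [Finset.sum_congr rfl (fun k _ => by rw [hcol k ⟨2, a⟩ rfl])]
          rw [← Matrix.toLin_self b b (1 : Matrix _ _ F) ⟨2, a⟩, Matrix.toLin_one,
            LinearMap.id_apply]
        exact LinearMap.mem_eqLocus.mpr hfix
      exact hsub hx
  have hRmem : ∀ u : (Matrix ((i : Fin 3) × Fin (n i)) ((i : Fin 3) × Fin (n i)) F)ˣ,
      Matrix.det (u : Matrix ((i : Fin 3) × Fin (n i)) ((i : Fin 3) × Fin (n i)) F) = 1 →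
      (∀ k l : (i : Fin 3) × Fin (n i), l.1 = 0 → (u : Matrix _ _ F) k l = (1 : Matrix _ _ F) k l) →
      (∀ k l : (i : Fin 3) × Fin (n i), k.1 = 0 → l.1 ≠ 0 → (u : Matrix _ _ F) k l = 0) →
      ψ u ∈ H := by
    intro u hdet hcol hzero
    apply hR (ψ u) ((hdetψ u).trans hdet)
    · intro x hx
      have hgen : ∀ p : (i : Fin 3) × Fin (n i), p.1 ≠ 0 → (ψ u) (b p) ∈ V₂ ⊔ V₃ := by
        intro p hp
        rw [happly]
        apply Submodule.sum_mem
        intro k _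
        by_cases hk : k.1 = 0
        · rw [hzero k p hk hp, zero_smul]; exact Submodule.zero_mem _
        · exact Submodule.smul_mem _ _ (hVsub23 k hk)
      have hsub : V₂ ⊔ V₃ ≤ Submodule.comap ((ψ u : V ≃ₗ[F] V) : V →ₗ[F] V) (V₂ ⊔ V₃) := by
        apply sup_le
        · refine le_trans (hspan 1) (Submodule.span_le.mpr ?_)
          rintro _ ⟨a, rfl⟩
          exact Submodule.mem_comap.mpr (hgen ⟨1, a⟩ (show (1:Fin 3) ≠ 0 by decide))
        · refine le_trans (hspan 2) (Submodule.span_le.mpr ?_)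
          rintro _ ⟨a, rfl⟩
          exact Submodule.mem_comap.mpr (hgen ⟨2, a⟩ (show (2:Fin 3) ≠ 0 by decide))
      exact hsub hx
    · intro x hx
      have hsub : V₁ ≤ LinearMap.eqLocus ((ψ u : V ≃ₗ[F] V) : V →ₗ[F] V) LinearMap.id := by
        refine le_trans (hspan 0) (Submodule.span_le.mpr ?_)
        rintro _ ⟨a, rfl⟩
        have hfix : (ψ u) (b ⟨0, a⟩) = b ⟨0, a⟩ := by
          rw [happly]
          rw [Finset.sum_congr rfl (fun k _ => by rw [hcol k ⟨0, a⟩ rfl])]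
          rw [← Matrix.toLin_self b b (1 : Matrix _ _ F) ⟨0, a⟩, Matrix.toLin_one,
            LinearMap.id_apply]
        exact LinearMap.mem_eqLocus.mpr hfix
      exact hsub hx
  -- block transvections
  have hbL : ∀ (i j : (i : Fin 3) × Fin (n i)) (hij : i ≠ j) (c : F),
      i.1 ≠ 2 → j.1 ≠ 2 → tvU i j hij c ∈ H' := by
    intro i j hij c hi2 hj2
    rw [hH', Subgroup.mem_comap]
    apply hLmem
    · rw [tvU_val]; exact Matrix.det_transvection_of_ne i j hij c
    · intro k l hl2
      have hne : ¬(i = k ∧ j = l) := fun h => hj2 (by rw [h.2]; exact hl2)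
      simp [Matrix.transvection, Matrix.single, hne]
    · intro k l hk2 hl2
      have hkl : k ≠ l := fun h => hl2 (h ▸ hk2)
      have hne : ¬(i = k ∧ j = l) := fun h => hi2 (by rw [h.1]; exact hk2)
      simp [Matrix.transvection, Matrix.single, hne, Matrix.one_apply_ne hkl]
  have hbR : ∀ (i j : (i : Fin 3) × Fin (n i)) (hij : i ≠ j) (c : F),
      i.1 ≠ 0 → j.1 ≠ 0 → tvU i j hij c ∈ H' := by
    intro i j hij c hi0 hj0
    rw [hH', Subgroup.mem_comap]
    apply hRmem
    · rw [tvU_val]; exact Matrix.det_transvection_of_ne i j hij c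
    · intro k l hl0
      have hne : ¬(i = k ∧ j = l) := fun h => hj0 (by rw [h.2]; exact hl0)
      simp [Matrix.transvection, Matrix.single, hne]
    · intro k l hk0 hl0
      have hkl : k ≠ l := fun h => hl0 (h ▸ hk0)
      have hne : ¬(i = k ∧ j = l) := fun h => hi0 (by rw [h.1]; exact hk0)
      simp [Matrix.transvection, Matrix.single, hne, Matrix.one_apply_ne hkl]
  -- middle block is nonempty
  have hk1 : 0 < n 1 := by
    have hnt : Nontrivial (A 1) := Submodule.nontrivial_iff_ne_bot.mpr (hA1 ▸ h2)
    exact Module.finrank_pos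
  set m : (i : Fin 3) × Fin (n i) := ⟨1, ⟨0, hk1⟩⟩ with hm
  -- all transvections
  have htv : ∀ (i j : (i : Fin 3) × Fin (n i)) (hij : i ≠ j) (c : F), tvU i j hij c ∈ H' := by
    intro i j hij c
    by_cases hc2 : i.1 ≠ 2 ∧ j.1 ≠ 2
    · exact hbL i j hij c hc2.1 hc2.2
    by_cases hc0 : i.1 ≠ 0 ∧ j.1 ≠ 0
    · exact hbR i j hij c hc0.1 hc0.2
    push_neg at hc2 hc0
    have hcross : (i.1 = 0 ∧ j.1 = 2) ∨ (i.1 = 2 ∧ j.1 = 0) := by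
      by_cases hi2 : i.1 = 2
      · refine Or.inr ⟨hi2, hc0 ?_⟩
        rw [hi2]; decide
      · have hj2 : j.1 = 2 := hc2 hi2
        have hi0 : i.1 = 0 := by
          by_contra hi0
          have := hc0 hi0
          rw [hj2] at this
          exact absurd this (by decide)
        exact Or.inl ⟨hi0, hj2⟩
    have hm1 : m.1 = 1 := by rw [hm]
    have him : i ≠ m := by
      intro h
      rcases hcross with ⟨hh, _⟩ | ⟨hh, _⟩ <;> rw [h, hm1] at hh
      · exact absurd hh (by decide)
      · exact absurd hh (by decide)
    have hmj : m ≠ j := by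
      intro h
      rcases hcross with ⟨_, hh⟩ | ⟨_, hh⟩ <;> rw [← h, hm1] at hh
      · exact absurd hh (by decide)
      · exact absurd hh (by decide)
    have hdecomp : tvU i j hij c
        = tvU i m him c * tvU m j hmj 1 * tvU i m him (-c) * tvU m j hmj (-1) := by
      apply Units.ext
      simp only [Units.val_mul, tvU_val]
      exact (tv_comm him hmj hij c).symm
    rw [hdecomp]
    rcases hcross with ⟨hi0, hj2⟩ | ⟨hi2, hj0⟩
    · exact mul_mem (mul_mem (mul_mem
        (hbL i m him c (by rw [hi0]; decide) (by rw [hm]; exact (show (1:Fin 3) ≠ 2 by decide)))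
        (hbR m j hmj 1 (by rw [hm]; exact (show (1:Fin 3) ≠ 0 by decide)) (by rw [hj2]; decide)))
        (hbL i m him (-c) (by rw [hi0]; decide) (by rw [hm]; exact (show (1:Fin 3) ≠ 2 by decide))))
        (hbR m j hmj (-1) (by rw [hm]; exact (show (1:Fin 3) ≠ 0 by decide)) (by rw [hj2]; decide))
    · exact mul_mem (mul_mem (mul_mem
        (hbR i m him c (by rw [hi2]; decide) (by rw [hm]; exact (show (1:Fin 3) ≠ 0 by decide)))
        (hbL m j hmj 1 (by rw [hm]; exact (show (1:Fin 3) ≠ 2 by decide)) (by rw [hj0]; decide)))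
        (hbR i m him (-c) (by rw [hi2]; decide) (by rw [hm]; exact (show (1:Fin 3) ≠ 0 by decide))))
        (hbL m j hmj (-1) (by rw [hm]; exact (show (1:Fin 3) ≠ 2 by decide)) (by rw [hj0]; decide))
  -- conclude
  intro g hdet
  have hu : ψ.symm g ∈ H' := by
    apply sl_mem H' htv
    have hd := hdetψ (ψ.symm g)
    rw [MulEquiv.apply_symm_apply] at hd
    rw [← hd]
    exact hdet
  rw [hH'] at hu
  have := Subgroup.mem_comap.mp hu
  simpa using this
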